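/- For every sentence φ of the empty first-order language: φ holds in every infinite structure for the empty language if and only if SAPP ⊨ φ', where φ' is the L-sentence obtained from φ via the inclusion of the empty language into L. -/

import Mathlib

open FirstOrder Language Structure BoundedFormula

/-- The relation symbols of the language `L`: a single binary relation `O`. -/
inductive PerpRel : ℕ → Type
  | o : PerpRel 2

/-- The first-order language with a single binary relation symbol `O`. -/
def L : Language := ⟨fun _ => Empty, PerpRel⟩
  deriving IsRelational

/-- The binary relation symbol `O` of `L`. -/
abbrev oSym : L.Relations 2 := .o

/-- `O(xᵢ, xⱼ)` as a bounded formula. -/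
def oBF {n : ℕ} (i j : Fin n) : L.BoundedFormula Empty n :=
  oSym.boundedFormula₂ (&i) (&j)

/-- Finite conjunction of a list of bounded formulas. -/
def andAll {n : ℕ} : List (L.BoundedFormula Empty n) → L.BoundedFormula Empty n
  | [] => ⊤
  | φ :: l => φ ⊓ andAll l

/-- λ₁ₙ : ∀y₁…∀yₙ∀s(O(s,y₁) ∧ … ∧ O(s,yₙ) → ∃t(t ≠ y₁ ∧ … ∧ t ≠ yₙ ∧ O(s,t))).
Variables: y₁,…,yₙ are de Bruijn indices 0,…,n-1, s is index n, t is index n+1. -/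
def lam1 (n : ℕ) : L.Sentence :=
  ((andAll ((List.finRange n).map fun i => oBF (Fin.last n) i.castSucc)).imp
    ((andAll ((List.finRange n).map fun i =>
        ∼((&(Fin.last (n + 1))) =' (&(i.castSucc.castSucc)))) ⊓
      oBF ((Fin.last n).castSucc) (Fin.last (n + 1))).ex)).alls

/-- λ₂ₙ : ∀y₁…∀yₙ∃s(¬O(s,y₁) ∧ … ∧ ¬O(s,yₙ)).
Variables: y₁,…,yₙ are de Bruijn indices 0,…,n-1, s is index n. -/
def lam2 (n : ℕ) : L.Sentence :=
  ((andAll ((List.finRange n).map fun i => ∼(oBF (Fin.last n) i.castSucc))).ex).alls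

/-- λ₃ : ∀x ¬O(x,x). -/
def lam3 : L.Sentence := (∼(oBF (0 : Fin 1) 0)).alls

/-- λ₄ : ∀x∀y(O(x,y) → O(y,x)). -/
def lam4 : L.Sentence := ((oBF (0 : Fin 2) 1).imp (oBF (1 : Fin 2) 0)).alls

/-- λ₅ : ∀x∃y O(x,y). -/
def lam5 : L.Sentence := ((oBF (0 : Fin 2) 1).ex).alls

/-- λ₆ : ∀x∀y∀z∀t(O(x,z) ∧ O(y,z) ∧ O(x,t) → O(y,t)). -/
def lam6 : L.Sentence :=
  ((oBF (0 : Fin 4) 2 ⊓ oBF (1 : Fin 4) 2 ⊓ oBF (0 : Fin 4) 3).imp (oBF (1 : Fin 4) 3)).alls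

/-- The theory SAPP. -/
def SAPP : L.Theory :=
  {φ | ∃ n, 1 ≤ n ∧ φ = lam1 n} ∪ {φ | ∃ n, 2 ≤ n ∧ φ = lam2 n} ∪ {lam3, lam4, lam5, lam6}

/-- Every type is (uniquely) a structure for the empty language. -/
instance (M : Type*) : Language.empty.Structure M := Language.emptyStructure
section Test
variable {M : Type*} [L.Structure M]

def R (a b : M) : Prop := RelMap oSym ![a, b]

theorem realize_andAll {n : ℕ} (l : List (L.BoundedFormula Empty n)) {v : Empty → M}
    {xs : Fin n → M} : (andAll l).Realize v xs ↔ ∀ ψ ∈ l, ψ.Realize v xs := by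
  induction l with
  | nil => simp [andAll]
  | cons a l ih => simp [andAll, ih]

theorem realize_oBF {n : ℕ} (i j : Fin n) {v : Empty → M} {xs : Fin n → M} :
    (oBF i j).Realize v xs ↔ R (xs i) (xs j) := by
  simp only [oBF, realize_rel₂, Term.realize_var, Sum.elim_inr, Function.comp]
  rfl

theorem realize_lam5 : M ⊨ lam5 ↔ ∀ x : M, ∃ y, R x y := by
  simp only [lam5, Sentence.Realize, realize_alls, realize_ex, realize_oBF]
  constructor
  · intro h x
    obtain ⟨y, hy⟩ := h (fun _ => x)
    exact ⟨y, by simpa [Fin.snoc] using hy⟩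
  · intro h xs
    obtain ⟨y, hy⟩ := h (xs 0)
    exact ⟨y, by simpa [Fin.snoc] using hy⟩

end Test
section Test2
variable {M : Type*} [L.Structure M]

theorem realize_andAll_finRange {n m : ℕ} (f : Fin m → L.BoundedFormula Empty n)
    {v : Empty → M} {xs : Fin n → M} :
    (andAll ((List.finRange m).map f)).Realize v xs ↔ ∀ i, (f i).Realize v xs := by
  rw [realize_andAll]; simp

theorem realize_lam1 {n : ℕ} : M ⊨ lam1 n ↔
    ∀ (ys : Fin n → M) (s : M), (∀ i, R s (ys i)) →
      ∃ t, (∀ i, t ≠ ys i) ∧ R s t := by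
  simp only [lam1, Sentence.Realize, realize_alls, realize_imp, realize_ex, realize_inf,
    realize_andAll_finRange, realize_not, realize_bdEqual, Term.realize_var, Sum.elim_inr,
    realize_oBF, Fin.snoc_castSucc, Fin.snoc_last]
  constructor
  · intro h ys s hy
    obtain ⟨t, h1, h2⟩ := h (Fin.snoc ys s) (by simpa [Fin.snoc_castSucc, Fin.snoc_last] using hy)
    rw [Fin.snoc_last] at h2
    exact ⟨t, fun i => by simpa using h1 i, h2⟩
  · intro h xs hy
    obtain ⟨t, h1, h2⟩ := h (fun i => xs i.castSucc) (xs (Fin.last n)) hy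
    exact ⟨t, fun i => by simpa using h1 i, h2⟩

theorem realize_lam2 {n : ℕ} : M ⊨ lam2 n ↔
    ∀ (ys : Fin n → M), ∃ s, ∀ i, ¬ R s (ys i) := by
  simp only [lam2, Sentence.Realize, realize_alls, realize_ex, realize_andAll_finRange,
    realize_not, realize_oBF, Fin.snoc_castSucc, Fin.snoc_last]

theorem realize_lam3 : M ⊨ lam3 ↔ ∀ x : M, ¬ R x x := by
  simp only [lam3, Sentence.Realize, realize_alls, realize_not, realize_oBF]
  exact ⟨fun h x => h (fun _ => x), fun h xs => h (xs 0)⟩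

theorem realize_lam4 : M ⊨ lam4 ↔ ∀ x y : M, R x y → R y x := by
  simp only [lam4, Sentence.Realize, realize_alls, realize_imp, realize_oBF]
  exact ⟨fun h x y => h ![x, y], fun h xs => h (xs 0) (xs 1)⟩

theorem realize_lam6 : M ⊨ lam6 ↔
    ∀ x y z t : M, R x z → R y z → R x t → R y t := by
  simp only [lam6, Sentence.Realize, realize_alls, realize_imp, realize_inf, realize_oBF, and_imp]
  constructor
  · intro h x y z t h1 h2 h3
    exact h ![x, y, z, t] h1 h2 h3
  · intro h xs
    exact h (xs 0) (xs 1) (xs 2) (xs 3)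

end Test2
section Test3

theorem lam1_mem {n : ℕ} (hn : 1 ≤ n) : lam1 n ∈ SAPP :=
  Set.mem_union_left _ (Set.mem_union_left _ ⟨n, hn, rfl⟩)

theorem lam2_mem {n : ℕ} (hn : 2 ≤ n) : lam2 n ∈ SAPP :=
  Set.mem_union_left _ (Set.mem_union_right _ ⟨n, hn, rfl⟩)

theorem lam3_mem : lam3 ∈ SAPP := Set.mem_union_right _ (by simp)
theorem lam4_mem : lam4 ∈ SAPP := Set.mem_union_right _ (by simp)
theorem lam5_mem : lam5 ∈ SAPP := Set.mem_union_right _ (by simp)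
theorem lam6_mem : lam6 ∈ SAPP := Set.mem_union_right _ (by simp)

/-- Models of SAPP are infinite. -/
theorem infinite_of_model_SAPP {N : Type w} [L.Structure N] [Nonempty N] (h : N ⊨ SAPP) :
    Infinite N := by
  have h5 := h.realize_of_mem lam5 lam5_mem
  rw [realize_lam5] at h5
  obtain ⟨s, t0, hst⟩ : ∃ s t : N, R s t := by
    obtain ⟨x⟩ := ‹Nonempty N›; obtain ⟨y, hy⟩ := h5 x; exact ⟨x, y, hy⟩
  by_contra hinf
  rw [not_infinite_iff_finite] at hinf
  have hSfin : {t : N | R s t}.Finite := Set.toFinite _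
  have hne : hSfin.toFinset.Nonempty := ⟨t0, hSfin.mem_toFinset.2 hst⟩
  have hlen : 1 ≤ hSfin.toFinset.toList.length := by
    rw [Finset.length_toList]; exact hne.card_pos
  have h1 := h.realize_of_mem (lam1 hSfin.toFinset.toList.length) (lam1_mem hlen)
  rw [realize_lam1] at h1
  obtain ⟨t, ht1, ht2⟩ := h1 hSfin.toFinset.toList.get s (fun i => by
    have : hSfin.toFinset.toList.get i ∈ hSfin.toFinset :=
      Finset.mem_toList.1 (List.get_mem _ _)
    exact hSfin.mem_toFinset.1 this)
  have htF : t ∈ hSfin.toFinset.toList := Finset.mem_toList.2 (hSfin.mem_toFinset.2 ht2)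
  obtain ⟨i, hi⟩ := List.mem_iff_get.1 htF
  exact ht1 i hi.symm

end Test3
section Test4
variable {M : Type*}

/-- An `L`-structure on `M` induced by a bijection `M ≃ (M × Bool) × M`. -/
noncomputable def sappStruct (e : M ≃ (M × Bool) × M) : L.Structure M where
  funMap := fun {n} f => isEmptyElim f
  RelMap := fun {n} r x =>
    match r with
    | .o => (e (x 1)).1 = ((e (x 0)).1.1, !(e (x 0)).1.2)

theorem sappStruct_R (e : M ≃ (M × Bool) × M) (a b : M) :
    (@R M (sappStruct e) a b) ↔ (e b).1 = ((e a).1.1, !(e a).1.2) := by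
  rfl

theorem sappStruct_model [Infinite M] (e : M ≃ (M × Bool) × M) :
    @Theory.Model L M (sappStruct e) SAPP := by
  letI := sappStruct e
  have hfib : ∀ p : M × Bool, {x : M | (e x).1 = p}.Infinite := by
    intro p
    apply Set.infinite_of_injective_forall_mem
      (f := fun m : M => e.symm (p, m))
    · intro a b hab
      have : (p, a) = (p, b) := e.symm.injective hab
      simpa using this
    · intro m
      simp [Set.mem_setOf_eq]
  have hR : ∀ a b : M, R a b ↔ (e b).1 = ((e a).1.1, !(e a).1.2) := sappStruct_R e
  rw [Theory.model_iff]
  intro ψ hψ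
  rcases hψ with ((⟨n, hn, rfl⟩ | ⟨n, hn, rfl⟩) | h34)
  · -- lam1
    rw [realize_lam1]
    intro ys s _
    obtain ⟨t, htmem, htne⟩ :=
      ((hfib ((e s).1.1, !(e s).1.2)).diff (Set.finite_range ys)).nonempty
    refine ⟨t, fun i hti => htne ⟨i, hti.symm⟩, (hR s t).2 htmem⟩
  · -- lam2
    rw [realize_lam2]
    intro ys
    obtain ⟨p, hp⟩ := (Set.finite_range
      (fun i : Fin n => ((e (ys i)).1.1, !(e (ys i)).1.2))).infinite_compl.nonempty
    obtain ⟨m0⟩ : Nonempty M := inferInstance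
    refine ⟨e.symm (p, m0), fun i hcon => ?_⟩
    rw [hR] at hcon
    simp only [Equiv.apply_symm_apply] at hcon
    apply hp
    refine ⟨i, ?_⟩
    show ((e (ys i)).1.1, !(e (ys i)).1.2) = p
    rw [hcon]
    simp
  · rcases h34 with (rfl | rfl | rfl | rfl)
    · rw [realize_lam3]
      intro x hx
      rw [hR] at hx
      have := congrArg Prod.snd hx
      simp at this
    · rw [realize_lam4]
      intro x y hxy
      rw [hR] at *
      rw [hxy]; simp
    · rw [realize_lam5]
      intro x
      exact ⟨e.symm (((e x).1.1, !(e x).1.2), x), by rw [hR]; simp⟩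
    · rw [realize_lam6]
      intro x y z t h1 h2 h3
      rw [hR] at *
      have hxy : (e x).1 = (e y).1 := by
        have h12 := h1.symm.trans h2
        simp only [Prod.mk.injEq] at h12
        exact Prod.ext h12.1 (Bool.not_inj h12.2)
      rw [h3, hxy]

end Test4
section Test5

theorem exists_sapp_equiv (M : Type*) [Infinite M] : Nonempty (M ≃ (M × Bool) × M) := by
  refine Cardinal.eq.1 ?_
  have h2 : (2 : Cardinal) ≤ (Cardinal.mk M) := (Cardinal.nat_lt_aleph0 2).le.trans (Cardinal.aleph0_le_mk M)
  simp only [Cardinal.mk_prod, Cardinal.mk_bool, Cardinal.lift_id, Cardinal.lift_two,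
    Cardinal.lift_id']
  rw [Cardinal.mul_eq_left (Cardinal.aleph0_le_mk M) h2 two_ne_zero,
    Cardinal.mul_eq_self (Cardinal.aleph0_le_mk M)]

theorem perpRel_subsingleton {n : ℕ} (a b : PerpRel n) : a = b := by
  cases a; cases b; rfl

instance : Countable L.Symbols := by
  have h1 : Countable (Σ l, L.Functions l) := by
    have : ∀ l, IsEmpty (L.Functions l) := inferInstance
    infer_instance
  have h2 : Countable (Σ l, L.Relations l) := by
    have : Function.Injective (fun x : Σ l, L.Relations l => x.1) := by
      rintro ⟨n, a⟩ ⟨m, b⟩ h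
      simp only at h
      subst h
      exact congrArg _ (perpRel_subsingleton a b)
    exact this.countable
  exact instCountableSum

theorem L_card_le : L.card ≤ Cardinal.aleph0 := Cardinal.mk_le_aleph0

end Test5

/-- a sentence φ of the empty language holds in every infinite structure iff
the L-sentence φ' obtained via the inclusion of the empty language into L is a logical
consequence of SAPP. -/
theorem statement_15 (φ : Language.empty.Sentence) :
    (∀ (M : Type*) [Infinite M], M ⊨ φ) ↔
      SAPP ⊨ᵇ (LHom.ofIsEmpty Language.empty L).onSentence φ := by
  constructor
  · intro h
    rw [Theory.models_sentence_iff]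
    intro N
    haveI : Infinite N := infinite_of_model_SAPP N.is_model
    have hN : (ULift.{_} N) ⊨ φ := h (ULift N)
    have hN2 : (N : Type) ⊨ φ :=
      (StrongHomClass.realize_sentence ((Equiv.ulift : ULift N ≃ N)) φ).1 hN
    rwa [LHom.realize_onSentence]
  · intro h M _inst
    obtain ⟨e⟩ := exists_sapp_equiv M
    letI st := sappStruct e
    haveI hmod : M ⊨ SAPP := sappStruct_model e
    obtain ⟨S, -, hS⟩ := Language.exists_elementarySubstructure_card_eq L (∅ : Set M)
      (Cardinal.aleph0 : Cardinal.{0}) le_rfl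
      (by simp)
      (by simpa using L_card_le)
      (by simpa using Cardinal.lift_le.2 (Cardinal.aleph0_le_mk M))
    have hSN : Nonempty (S ≃ ℕ) := Cardinal.lift_mk_eq'.1 (by rw [Cardinal.mk_nat]; exact hS)
    obtain ⟨f⟩ := hSN
    letI : L.Structure ℕ := f.inducedStructure
    haveI hn_model : ℕ ⊨ SAPP := StrongHomClass.theory_model (f.inducedStructureEquiv (L := L))
    have hn : ℕ ⊨ (LHom.ofIsEmpty Language.empty L).onSentence φ :=
      Theory.models_sentence_iff.1 h (Theory.ModelType.of SAPP ℕ)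
    have hs : (S : Type _) ⊨ (LHom.ofIsEmpty Language.empty L).onSentence φ :=
      (StrongHomClass.realize_sentence (f.inducedStructureEquiv (L := L)) _).2 hn
    have hm : M ⊨ (LHom.ofIsEmpty Language.empty L).onSentence φ :=
      (S.realize_sentence _).1 hs
    rwa [LHom.realize_onSentence] at hm
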